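/- arXiv:2603.00284 — 2 statements merged into one kernel-verified Lean document; each statement's English description precedes it below -/
import Mathlib

section
/- Every linear functional φ on the polynomials of degree ≤ 2n that is feasible at order n satisfies |φ(x^α)| ≤ 1 for every monomial x^α with |α| ≤ 2n; in particular φ(x_i^{2n}) ≤ 1 for every i = 1,…,d. -/
open MvPolynomial Finset

noncomputable section

/-- The Hessian of a polynomial, as a matrix with polynomial entries. -/
def polyHessian {d : ℕ} (p : MvPolynomial (Fin d) ℝ) :
    Matrix (Fin d) (Fin d) (MvPolynomial (Fin d) ℝ) :=
  Matrix.of fun i j => pderiv i (pderiv j p)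

/-- A polynomial is a sum of squares (SOS). -/
def IsSOS {σ : Type} (p : MvPolynomial σ ℝ) : Prop :=
  ∃ (s : ℕ) (q : Fin s → MvPolynomial σ ℝ), p = ∑ k, q k ^ 2

/-- A polynomial `g` is SOS-concave: `-∇²g = L Lᵀ` for some polynomial matrix `L`. -/
def IsSOSConcave {d : ℕ} (g : MvPolynomial (Fin d) ℝ) : Prop :=
  ∃ (r : ℕ) (L : Matrix (Fin d) (Fin r) (MvPolynomial (Fin d) ℝ)),
    -polyHessian g = L * L.transpose

/-- Standing assumptions: `g 0 = 1`, the last constraint is `1 - ‖x‖²`,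
and every `g j`, `j = 1,…,m+1`, is SOS-concave. -/
def GoodConstraints {d m : ℕ} (g : Fin (m + 2) → MvPolynomial (Fin d) ℝ) : Prop :=
  g 0 = 1 ∧ g (Fin.last (m + 1)) = 1 - ∑ i : Fin d, X i ^ 2 ∧
    ∀ j : Fin (m + 2), j ≠ 0 → IsSOSConcave (g j)

/-- The feasible set `Ω = {x : g j (x) ≥ 0 ∀ j}` (the condition for `j = 0` is vacuous
since `g 0 = 1`). -/
def OmegaSet {d m : ℕ} (g : Fin (m + 2) → MvPolynomial (Fin d) ℝ) : Set (Fin d → ℝ) :=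
  {x | ∀ j : Fin (m + 2), 0 ≤ eval x (g j)}

/-- `⌈deg p / 2⌉`. -/
def degHalf {d : ℕ} (p : MvPolynomial (Fin d) ℝ) : ℕ := (p.totalDegree + 1) / 2

/-- A linear functional on polynomials (its values on degrees ≤ 2n are the only ones
constrained) is feasible at order `n` if `φ(1) = 1` and `φ(p² gⱼ) ≥ 0` for all `j`
and all `p` with `deg p ≤ n - dⱼ`. -/
def Feasible {d m : ℕ} (g : Fin (m + 2) → MvPolynomial (Fin d) ℝ) (n : ℕ)
    (φ : MvPolynomial (Fin d) ℝ →ₗ[ℝ] ℝ) : Prop :=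
  φ 1 = 1 ∧ ∀ j : Fin (m + 2), ∀ p : MvPolynomial (Fin d) ℝ,
    p.totalDegree ≤ n - degHalf (g j) → 0 ≤ φ (p ^ 2 * g j)

/-- The point `φ(x) = (φ(x₁),…,φ(x_d))`. -/
def phiPoint {d : ℕ} (φ : MvPolynomial (Fin d) ℝ →ₗ[ℝ] ℝ) : Fin d → ℝ :=
  fun i => φ (X i)

/-- `f` is strongly convex on `S`: `∇²f(x) - μI ⪰ 0` on `S` for some `μ > 0`. -/
def StronglyConvexOnSet {d : ℕ} (f : MvPolynomial (Fin d) ℝ) (S : Set (Fin d → ℝ)) : Prop :=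
  ∃ μ : ℝ, 0 < μ ∧ ∀ x ∈ S,
    Matrix.PosSemidef ((polyHessian f).map (fun p => eval x p)
      - μ • (1 : Matrix (Fin d) (Fin d) ℝ))

/-- `f` is SOS-convex on `Ω`: `∇²f = Σⱼ gⱼ · Lⱼ Lⱼᵀ`. -/
def IsSOSConvexOnOmega {d m : ℕ} (g : Fin (m + 2) → MvPolynomial (Fin d) ℝ)
    (f : MvPolynomial (Fin d) ℝ) : Prop :=
  ∃ (r : Fin (m + 2) → ℕ)
    (L : ∀ j, Matrix (Fin d) (Fin (r j)) (MvPolynomial (Fin d) ℝ)),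
    polyHessian f = ∑ j, g j • (L j * (L j).transpose)

/-- `n_min = max{⌈deg f/2⌉, max_{j=1,…,m+1} dⱼ}`. -/
def nMin {d m : ℕ} (g : Fin (m + 2) → MvPolynomial (Fin d) ℝ)
    (f : MvPolynomial (Fin d) ℝ) : ℕ :=
  max (degHalf f) (((univ : Finset (Fin (m + 2))).erase 0).sup fun j => degHalf (g j))

/-- `ρₙ = inf {φ(f) : φ feasible at order n}`. -/
def rho {d m : ℕ} (g : Fin (m + 2) → MvPolynomial (Fin d) ℝ)
    (f : MvPolynomial (Fin d) ℝ) (n : ℕ) : ℝ :=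
  sInf {r : ℝ | ∃ φ : MvPolynomial (Fin d) ℝ →ₗ[ℝ] ℝ, Feasible g n φ ∧ φ f = r}

/-- `f* = min_{x ∈ Ω} f(x)`. -/
def fstar {d m : ℕ} (g : Fin (m + 2) → MvPolynomial (Fin d) ℝ)
    (f : MvPolynomial (Fin d) ℝ) : ℝ :=
  sInf ((fun x => eval x f) '' OmegaSet g)

private lemma totalDegree_mon' {d : ℕ} (β : Fin d →₀ ℕ) :
    (monomial β (1 : ℝ)).totalDegree = ∑ i, β i := by
  rw [totalDegree_monomial _ (one_ne_zero)]
  exact Finsupp.sum_fintype _ _ (fun _ => rfl)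

private lemma exists_split' {d : ℕ} (α : Fin d →₀ ℕ) :
    ∀ t, t ≤ ∑ i, α i → ∃ γ : Fin d →₀ ℕ, γ ≤ α ∧ ∑ i, γ i = t := by
  intro t
  induction t with
  | zero => exact fun _ => ⟨0, zero_le, by simp⟩
  | succ t ih =>
    intro ht
    obtain ⟨γ, hle, hsum⟩ := ih (Nat.le_of_succ_le ht)
    obtain ⟨i, hi⟩ : ∃ i, γ i < α i := by
      by_contra h
      push_neg at h
      have : ∑ i, α i ≤ ∑ i, γ i := Finset.sum_le_sum fun i _ => h i
      omega
    refine ⟨γ + Finsupp.single i 1, Finsupp.le_def.mpr fun j => ?_, ?_⟩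
    · rcases eq_or_ne j i with rfl | hne
      · simp only [Finsupp.add_apply, Finsupp.single_apply]
        split <;> omega
      · have := Finsupp.le_def.mp hle j
        simp only [Finsupp.add_apply, Finsupp.single_apply]
        split <;> omega
    · simp [Finsupp.add_apply, Finset.sum_add_distrib, Finsupp.single_apply, hsum]

private lemma sq_mom_le_one' {d m : ℕ} (g : Fin (m + 2) → MvPolynomial (Fin d) ℝ)
    (hg : GoodConstraints g) (n : ℕ) (φ : MvPolynomial (Fin d) ℝ →ₗ[ℝ] ℝ)
    (hφ : Feasible g n φ) :
    ∀ k (β : Fin d →₀ ℕ), ∑ i, β i = k → k ≤ n → φ ((monomial β (1 : ℝ)) ^ 2) ≤ 1 := by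
  have hsq : ∀ p : MvPolynomial (Fin d) ℝ, p.totalDegree ≤ n → 0 ≤ φ (p ^ 2) := by
    intro p hp
    have h0 := hφ.2 0 p ?_
    · rwa [hg.1, mul_one] at h0
    · rw [hg.1]
      have : degHalf (1 : MvPolynomial (Fin d) ℝ) = 0 := by
        simp [degHalf, totalDegree_one]
      omega
  have hdeg_last : degHalf (g (Fin.last (m + 1))) ≤ 1 := by
    rw [hg.2.1]
    have h2 : (1 - ∑ i : Fin d, X i ^ 2 : MvPolynomial (Fin d) ℝ).totalDegree ≤ 2 := by
      rw [sub_eq_add_neg]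
      refine le_trans (totalDegree_add _ _) (max_le ?_ ?_)
      · simp [totalDegree_one]
      · rw [totalDegree_neg]
        refine le_trans (totalDegree_finset_sum _ _) (Finset.sup_le fun i _ => ?_)
        rw [totalDegree_X_pow]
    unfold degHalf
    omega
  intro k
  induction k with
  | zero =>
    intro β hβ _
    have hβ0 : β = 0 := by
      ext i
      exact Finset.sum_eq_zero_iff.mp hβ i (mem_univ i)
    subst hβ0
    simp [hφ.1]
  | succ k ih =>
    intro β hβ hn
    obtain ⟨i, hi⟩ : ∃ i, β i ≠ 0 := by
      by_contra h
      push_neg at h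
      simp [h] at hβ
    set β' := β - Finsupp.single i 1 with hβ'def
    have hle : Finsupp.single i 1 ≤ β := Finsupp.single_le_iff.mpr (by omega)
    have hβeq : β' + Finsupp.single i 1 = β := tsub_add_cancel_of_le hle
    have hsum' : ∑ j, β' j = k := by
      have h1 : ∑ j, ((β' + Finsupp.single i 1 : Fin d →₀ ℕ)) j = ∑ j, β j := by rw [hβeq]
      have h2 : ∑ j, ((β' + Finsupp.single i 1 : Fin d →₀ ℕ)) j = (∑ j, β' j) + 1 := by
        simp [Finsupp.add_apply, Finset.sum_add_distrib, Finsupp.single_apply]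
      omega
    have hmul : ∀ j, monomial β' (1 : ℝ) * X j = monomial (β' + Finsupp.single j 1) 1 := by
      intro j
      rw [show (X j : MvPolynomial (Fin d) ℝ) = monomial (Finsupp.single j 1) 1 from rfl,
        monomial_mul, mul_one]
    have hsumj : ∀ j : Fin d, ∑ l, ((β' + Finsupp.single j 1 : Fin d →₀ ℕ)) l = k + 1 := by
      intro j
      simp [Finsupp.add_apply, Finset.sum_add_distrib, Finsupp.single_apply, hsum']
    -- constraint with g last
    have hc := hφ.2 (Fin.last (m + 1)) (monomial β' 1) (by
      rw [totalDegree_mon', hsum']; omega)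
    rw [hg.2.1] at hc
    have expand : (monomial β' (1 : ℝ)) ^ 2 * (1 - ∑ j : Fin d, X j ^ 2)
        = (monomial β' (1 : ℝ)) ^ 2 - ∑ j : Fin d, (monomial β' (1 : ℝ) * X j) ^ 2 := by
      rw [mul_sub, mul_one, Finset.mul_sum]
      refine congrArg ((monomial β' (1 : ℝ)) ^ 2 - ·) ?_
      exact Finset.sum_congr rfl fun j _ => (mul_pow _ _ _).symm
    rw [expand, map_sub, map_sum] at hc
    have hterm : ∀ j : Fin d, 0 ≤ φ ((monomial β' (1 : ℝ) * X j) ^ 2) := by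
      intro j
      refine hsq _ ?_
      rw [hmul j, totalDegree_mon', hsumj j]
      omega
    have hone : φ ((monomial β' (1 : ℝ)) ^ 2) ≤ 1 := ih β' hsum' (by omega)
    have hkey : φ ((monomial β' (1 : ℝ) * X i) ^ 2)
        ≤ ∑ j : Fin d, φ ((monomial β' (1 : ℝ) * X j) ^ 2) :=
      Finset.single_le_sum (fun j _ => hterm j) (mem_univ i)
    have : φ ((monomial β (1 : ℝ)) ^ 2) = φ ((monomial β' (1 : ℝ) * X i) ^ 2) := by
      rw [hmul i, hβeq]
    linarith


/-- Every feasible `φ` at order `n` satisfies `|φ(x^α)| ≤ 1` for every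
monomial of degree `≤ 2n`; in particular `φ(xᵢ^{2n}) ≤ 1` for every `i`. -/
theorem moments_bounded {d m : ℕ}
    (g : Fin (m + 2) → MvPolynomial (Fin d) ℝ) (hg : GoodConstraints g)
    (n : ℕ) (φ : MvPolynomial (Fin d) ℝ →ₗ[ℝ] ℝ) (hφ : Feasible g n φ) :
    (∀ α : Fin d →₀ ℕ, (∑ i, α i) ≤ 2 * n → |φ (monomial α (1 : ℝ))| ≤ 1) ∧
    ∀ i : Fin d, φ (X i ^ (2 * n)) ≤ 1 := by
  have hsq : ∀ p : MvPolynomial (Fin d) ℝ, p.totalDegree ≤ n → 0 ≤ φ (p ^ 2) := by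
    intro p hp
    have h0 := hφ.2 0 p ?_
    · rwa [hg.1, mul_one] at h0
    · rw [hg.1]
      have : degHalf (1 : MvPolynomial (Fin d) ℝ) = 0 := by
        simp [degHalf, totalDegree_one]
      omega
  have key : ∀ α : Fin d →₀ ℕ, (∑ i, α i) ≤ 2 * n → |φ (monomial α (1 : ℝ))| ≤ 1 := by
    intro α hα
    obtain ⟨γ, hγle, hγsum⟩ := exists_split' α (min n (∑ i, α i)) (min_le_right _ _)
    set δ := α - γ with hδdef
    have hadd : γ + δ = α := add_tsub_cancel_of_le hγle
    have hδsum : ∑ i, δ i = (∑ i, α i) - min n (∑ i, α i) := by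
      have h1 : ∑ i, (γ + δ) i = ∑ i, α i := by rw [hadd]
      have h2 : ∑ i, (γ + δ) i = (∑ i, γ i) + ∑ i, δ i := by
        simp [Finsupp.add_apply, Finset.sum_add_distrib]
      omega
    set p := monomial γ (1 : ℝ) with hp
    set q := monomial δ (1 : ℝ) with hq
    have hpq : p * q = monomial α (1 : ℝ) := by
      rw [hp, hq, monomial_mul, one_mul, hadd]
    have hdp : p.totalDegree ≤ n := by rw [hp, totalDegree_mon', hγsum]; omega
    have hdq : q.totalDegree ≤ n := by rw [hq, totalDegree_mon', hδsum]; omega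
    have hplus : 0 ≤ φ ((p + q) ^ 2) :=
      hsq _ (le_trans (totalDegree_add _ _) (max_le hdp hdq))
    have hminus : 0 ≤ φ ((p - q) ^ 2) := by
      refine hsq _ ?_
      rw [sub_eq_add_neg]
      refine le_trans (totalDegree_add _ _) (max_le hdp ?_)
      rwa [totalDegree_neg]
    have e1 : (p + q) ^ 2 = p ^ 2 + q ^ 2 + (p * q + p * q) := by ring
    have e2 : (p - q) ^ 2 = p ^ 2 + q ^ 2 - (p * q + p * q) := by ring
    rw [e1, map_add, map_add, map_add, hpq] at hplus
    rw [e2, map_sub, map_add, map_add, hpq] at hminus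
    have hp1 : φ (p ^ 2) ≤ 1 :=
      sq_mom_le_one' g hg n φ hφ _ γ rfl (by omega)
    have hq1 : φ (q ^ 2) ≤ 1 :=
      sq_mom_le_one' g hg n φ hφ _ δ rfl (by omega)
    rw [abs_le]
    constructor <;> linarith
  refine ⟨key, fun i => ?_⟩
  rw [X_pow_eq_monomial]
  refine le_trans (le_abs_self _) (key _ ?_)
  simp [Finsupp.single_apply]
end
end

section
/- Let n ≥ n_min := max{⌈deg(f)/2⌉, max_{j=1,…,m+1} d_j} and let φ* be a linear functional feasible at order n that attains the infimum, i.e., φ*(f) = ρ_n. If f(φ*(x)) ≤ ρ_n, then ρ_n = f* and the point x* := φ*(x) ∈ Ω is a global minimizer of f on Ω. -/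
open MvPolynomial Finset

noncomputable section

abbrev MvA (d : ℕ) := MvPolynomial (Fin d) ℝ

variable {d : ℕ}


variable {d : ℕ}

/-- A sum of squares of real polynomials is zero iff each is zero. -/
lemma aux_sos_zero {s : ℕ} (q : Fin s → MvPolynomial (Fin d) ℝ)
    (h : ∑ k, q k ^ 2 = 0) : ∀ k, q k = 0 := by
  intro k
  apply MvPolynomial.funext
  intro x
  have hx : ∑ j, (eval x (q j)) ^ 2 = 0 := by
    have := congrArg (eval x) h
    simpa using this
  have hk : (eval x (q k)) ^ 2 = 0 :=
    Finset.sum_eq_zero_iff_of_nonneg (fun j _ => sq_nonneg (eval x (q j))) |>.mp hx k (mem_univ k)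
  simpa using pow_eq_zero_iff (n := 2) (by norm_num) |>.mp hk

/-- degree of pderiv -/
lemma aux_totalDegree_pderiv_le (i : Fin d) (p : MvPolynomial (Fin d) ℝ) :
    (pderiv i p).totalDegree ≤ p.totalDegree - 1 := by
  conv_lhs => rw [p.as_sum]
  rw [map_sum]
  refine (totalDegree_finset_sum _ _).trans ?_
  refine Finset.sup_le fun α hα => ?_
  rw [pderiv_monomial]
  rcases Nat.eq_zero_or_pos (α i) with h0 | h1
  · simp [h0]
  · refine (totalDegree_monomial_le _ _).trans ?_
    show (α - Finsupp.single i 1).sum (fun _ e => e) ≤ _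
    have hle : Finsupp.single i 1 ≤ α := by
      rw [Finsupp.single_le_iff]; exact h1
    have hc : (α - Finsupp.single i 1) + Finsupp.single i 1 = α := tsub_add_cancel_of_le hle
    have hsum : (α - Finsupp.single i 1).sum (fun _ e => e) + 1 = α.sum (fun _ e => e) := by
      calc (α - Finsupp.single i 1).sum (fun _ e => e) + 1
          = (α - Finsupp.single i 1).sum (fun _ e => e)
            + (Finsupp.single i 1).sum (fun _ e => e) := by
            rw [Finsupp.sum_single_index]; rfl
        _ = ((α - Finsupp.single i 1) + Finsupp.single i 1).sum (fun _ e => e) := by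
            rw [Finsupp.sum_add_index'] <;> simp
        _ = α.sum (fun _ e => e) := by rw [hc]
    have hmem : α.sum (fun _ e => e) ≤ p.totalDegree := le_totalDegree hα
    omega


variable {d : ℕ}

lemma aux_hc_totalDegree_ne_zero (p : MvPolynomial (Fin d) ℝ) (hp : p ≠ 0) :
    homogeneousComponent p.totalDegree p ≠ 0 := by
  have hs : p.support.Nonempty := by
    rwa [Finset.nonempty_iff_ne_empty, Ne, MvPolynomial.support_eq_empty]
  obtain ⟨α, hα, hdeg⟩ := Finset.exists_mem_eq_sup p.support hs (fun s => s.sum fun _ e => e)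
  have hco : coeff α (homogeneousComponent p.totalDegree p) = coeff α p := by
    rw [coeff_homogeneousComponent, if_pos]
    show (α.sum fun _ e => e) = p.totalDegree
    rw [totalDegree, hdeg]
  intro h
  rw [h, coeff_zero] at hco
  exact (mem_support_iff.mp hα) hco.symm

lemma aux_hc_sq (q : MvPolynomial (Fin d) ℝ) (D : ℕ) (hq : q.totalDegree ≤ D) :
    homogeneousComponent (2 * D) (q ^ 2) =
      (homogeneousComponent D q) ^ 2 := by
  rcases lt_or_eq_of_le hq with hlt | heq
  · have h1 : (q ^ 2).totalDegree < 2 * D := by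
      calc (q ^ 2).totalDegree ≤ 2 * q.totalDegree := by
            simpa [two_mul] using totalDegree_pow q 2
        _ < 2 * D := by omega
    rw [homogeneousComponent_eq_zero _ _ h1, homogeneousComponent_eq_zero _ _ hlt]
    simp
  · conv_lhs => rw [← sum_homogeneousComponent q]
    rw [sq, Finset.sum_mul_sum, map_sum]
    have hterm : ∀ i ∈ Finset.range (q.totalDegree + 1), ∀ j ∈ Finset.range (q.totalDegree + 1),
        homogeneousComponent (2 * D) (homogeneousComponent i q * homogeneousComponent j q)
          = if 2 * D = i + j then homogeneousComponent i q * homogeneousComponent j q else 0 := by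
      intro i _ j _
      exact homogeneousComponent_of_mem (mem_homogeneousSubmodule _ _ |>.mpr
        ((homogeneousComponent_isHomogeneous i q).mul (homogeneousComponent_isHomogeneous j q)))
    rw [Finset.sum_congr rfl (fun i hi => map_sum _ _ _)]
    rw [Finset.sum_congr rfl (fun i hi => Finset.sum_congr rfl (fun j hj => hterm i hi j hj))]
    rw [heq]
    rw [Finset.sum_eq_single D]
    · rw [Finset.sum_eq_single D]
      · rw [if_pos (by omega), sq]
      · intro j hj hne
        rw [if_neg]
        rw [Finset.mem_range] at hj
        omega
      · intro h
        exact absurd (Finset.self_mem_range_succ D) h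
    · intro i hi hne
      rw [Finset.mem_range] at hi
      apply Finset.sum_eq_zero
      intro j hj
      rw [Finset.mem_range] at hj
      rw [if_neg (by omega)]
    · intro h
      exact absurd (Finset.self_mem_range_succ D) h

variable {d : ℕ}

lemma aux_sq_le_sum_sq {s : ℕ} (q : Fin s → MvPolynomial (Fin d) ℝ) (k0 : Fin s) :
    2 * (q k0).totalDegree ≤ (∑ k, q k ^ 2).totalDegree := by
  by_cases hq0 : q k0 = 0
  · simp [hq0]
  set D := Finset.univ.sup (fun k => (q k).totalDegree) with hD
  have hall : ∀ k, (q k).totalDegree ≤ D := fun k => by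
    rw [hD]; exact Finset.le_sup (f := fun k => (q k).totalDegree) (mem_univ k)
  have hk0D : (q k0).totalDegree ≤ D := hall k0
  suffices h : 2 * D ≤ (∑ k, q k ^ 2).totalDegree by omega
  -- find k1 with totalDegree = D and hc_D (q k1) ≠ 0
  obtain ⟨k1, hk1d, hk1ne⟩ : ∃ k1, (q k1).totalDegree = D ∧
      homogeneousComponent D (q k1) ≠ 0 := by
    rcases Nat.eq_zero_or_pos D with h0 | hpos
    · refine ⟨k0, by omega, ?_⟩
      have : (q k0).totalDegree = D := by omega
      rw [← this]
      exact aux_hc_totalDegree_ne_zero _ hq0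
    · obtain ⟨k1, _, hk1⟩ := Finset.exists_mem_eq_sup Finset.univ
        (⟨k0, mem_univ k0⟩ : Finset.univ.Nonempty) (fun k => (q k).totalDegree)
      have hk1' : (q k1).totalDegree = D := by rw [hD, hk1]
      refine ⟨k1, hk1', ?_⟩
      rw [← hk1']
      apply aux_hc_totalDegree_ne_zero
      intro hzero
      rw [hzero] at hk1'
      simp only [totalDegree_zero] at hk1'
      omega
  have hne : homogeneousComponent (2 * D) (∑ k, q k ^ 2) ≠ 0 := by
    rw [map_sum]
    rw [Finset.sum_congr rfl (fun k _ => aux_hc_sq (q k) D (hall k))]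
    intro hzero
    exact hk1ne (aux_sos_zero _ hzero k1)
  by_contra hcon
  push_neg at hcon
  exact hne (homogeneousComponent_eq_zero _ _ hcon)

variable {d : ℕ}

lemma aux_totalDegree_aeval_le (σf : Fin d → MvPolynomial (Fin d) ℝ)
    (hσ : ∀ i, (σf i).totalDegree ≤ 1) (p : MvPolynomial (Fin d) ℝ) :
    (aeval σf p).totalDegree ≤ p.totalDegree := by
  rw [aeval_def, eval₂_eq]
  refine (totalDegree_finset_sum _ _).trans ?_
  refine Finset.sup_le fun α hα => ?_
  refine (totalDegree_mul _ _).trans ?_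
  have h1 : (algebraMap ℝ (MvPolynomial (Fin d) ℝ) (coeff α p)).totalDegree = 0 := by
    simp [algebraMap_eq, totalDegree_C]
  rw [h1, zero_add]
  refine (totalDegree_finset_prod _ _).trans ?_
  have h2 : ∑ i ∈ α.support, (σf i ^ α i).totalDegree ≤ ∑ i ∈ α.support, α i := by
    refine Finset.sum_le_sum fun i _ => ?_
    refine (totalDegree_pow _ _).trans ?_
    calc α i * (σf i).totalDegree ≤ α i * 1 := Nat.mul_le_mul_left _ (hσ i)
      _ = α i := by omega
  refine h2.trans ?_
  have : ∑ i ∈ α.support, α i = α.sum fun _ e => e := rfl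
  rw [this]
  exact le_totalDegree hα

variable {d : ℕ}

def lineSub (u : Fin d → ℝ) (i : Fin d) : Polynomial (MvA d) :=
  Polynomial.C (X i - C (u i)) * Polynomial.X + Polynomial.C (C (u i))

def lineMap (u : Fin d → ℝ) : MvA d →ₐ[ℝ] Polynomial (MvA d) := aeval (lineSub u)

lemma lineMap_X (u : Fin d → ℝ) (i : Fin d) : lineMap u (X i) = lineSub u i :=
  aeval_X _ i

lemma lineMap_eval (u : Fin d → ℝ) (a : MvA d) (p : MvA d) :
    (lineMap u p).eval a = aeval (fun i => (X i - C (u i)) * a + C (u i)) p := by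
  induction p using MvPolynomial.induction_on with
  | C r =>
    rw [show ((C r : MvA d)) = algebraMap ℝ (MvA d) r from rfl, AlgHom.commutes,
      AlgHom.commutes]
    simp [Polynomial.algebraMap_apply, algebraMap_eq]
  | add p q hp hq => rw [map_add, Polynomial.eval_add, hp, hq, map_add]
  | mul_X p i hp =>
    rw [map_mul, Polynomial.eval_mul, hp, map_mul, lineMap_X, aeval_X]
    congr 1
    simp [lineSub]

lemma aux_aeval_const (u : Fin d → ℝ) (p : MvA d) :
    aeval (fun i => (C (u i) : MvA d)) p = C (eval u p) := by
  induction p using MvPolynomial.induction_on with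
  | C r =>
    rw [show ((C r : MvA d)) = algebraMap ℝ (MvA d) r from rfl, AlgHom.commutes]
    simp [algebraMap_eq]
  | add p q hp hq => rw [map_add, hp, hq, map_add, map_add]
  | mul_X p i hp => rw [map_mul, hp, aeval_X, map_mul, eval_X, ← map_mul]

lemma lineMap_eval_one (u : Fin d → ℝ) (p : MvA d) :
    (lineMap u p).eval 1 = p := by
  rw [lineMap_eval]
  have h : (fun i => (X i - C (u i)) * 1 + C (u i)) = (X : Fin d → MvA d) := by
    funext i; ring
  rw [h, aeval_X_left_apply]

lemma lineMap_eval_zero (u : Fin d → ℝ) (p : MvA d) :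
    (lineMap u p).eval 0 = C (eval u p) := by
  rw [lineMap_eval]
  have h : (fun i => (X i - C (u i)) * 0 + C (u i)) = (fun i => (C (u i) : MvA d)) := by
    funext i; ring
  rw [h, aux_aeval_const]

lemma lineMap_chain (u : Fin d → ℝ) (p : MvA d) :
    (lineMap u p).derivative = ∑ i, lineMap u (pderiv i p) * Polynomial.C (X i - C (u i)) := by
  induction p using MvPolynomial.induction_on with
  | C r =>
    rw [show ((C r : MvA d)) = algebraMap ℝ (MvA d) r from rfl, AlgHom.commutes]
    simp [Polynomial.algebraMap_apply, pderiv_C]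
  | add p q hp hq =>
    simp only [map_add, hq, hp, ← Finset.sum_add_distrib, add_mul]
  | mul_X p i hp =>
    have hτ : (lineSub u i).derivative = Polynomial.C (X i - C (u i)) := by
      simp [lineSub]
    have key : ∀ j : Fin d, lineMap u (pderiv j (p * X i)) * Polynomial.C (X j - C (u j))
        = lineMap u (pderiv j p) * Polynomial.C (X j - C (u j)) * lineSub u i
          + lineMap u p * (lineMap u (pderiv j (X i)) * Polynomial.C (X j - C (u j))) := by
      intro j
      rw [pderiv_mul, map_add, map_mul (lineMap u), map_mul (lineMap u), lineMap_X]
      ring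
    have hcol : ∑ j : Fin d, lineMap u (pderiv j (X i)) * Polynomial.C (X j - C (u j))
        = Polynomial.C (X i - C (u i)) := by
      rw [Finset.sum_eq_single i]
      · rw [pderiv_X_self, map_one, one_mul]
      · intro j _ hne
        rw [pderiv_X_of_ne hne.symm, map_zero, zero_mul]
      · intro h; exact absurd (mem_univ i) h
    have hsum : ∑ j : Fin d, lineMap u (pderiv j (p * X i)) * Polynomial.C (X j - C (u j))
        = (∑ j : Fin d, lineMap u (pderiv j p) * Polynomial.C (X j - C (u j))) * lineSub u i
          + lineMap u p * Polynomial.C (X i - C (u i)) := by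
      rw [Finset.sum_congr rfl (fun j (_ : j ∈ univ) => key j), Finset.sum_add_distrib,
        ← Finset.sum_mul, ← Finset.mul_sum, hcol]
    rw [map_mul (lineMap u), Polynomial.derivative_mul, hp, lineMap_X, hτ, hsum]

variable {d : ℕ}
def mapPhi (φ : MvA d →ₗ[ℝ] ℝ) (P : Polynomial (MvA d)) : Polynomial ℝ :=
  ∑ m ∈ P.support, Polynomial.C (φ (P.coeff m)) * Polynomial.X ^ m

lemma coeff_mapPhi (φ : MvA d →ₗ[ℝ] ℝ) (P : Polynomial (MvA d)) (j : ℕ) :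
    (mapPhi φ P).coeff j = φ (P.coeff j) := by
  rw [mapPhi, Polynomial.finset_sum_coeff]
  have : ∀ m ∈ P.support, (Polynomial.C (φ (P.coeff m)) * Polynomial.X ^ m).coeff j
      = if j = m then φ (P.coeff m) else 0 := by
    intro m _
    rw [Polynomial.coeff_C_mul, Polynomial.coeff_X_pow]
    split <;> simp_all
  rw [Finset.sum_congr rfl this, Finset.sum_ite_eq P.support j (fun m => φ (P.coeff m))]
  split
  · rfl
  · next h =>
    rw [Polynomial.notMem_support_iff.mp h, map_zero]

lemma mapPhi_derivative (φ : MvA d →ₗ[ℝ] ℝ) (P : Polynomial (MvA d)) :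
    mapPhi φ P.derivative = (mapPhi φ P).derivative := by
  ext j
  rw [coeff_mapPhi, Polynomial.coeff_derivative, Polynomial.coeff_derivative, coeff_mapPhi]
  have : P.coeff (j + 1) * ((j : MvA d) + 1) = ((j : ℝ) + 1) • P.coeff (j + 1) := by
    rw [smul_eq_C_mul, mul_comm]
    congr 1
    push_cast
    rw [map_add, map_natCast, map_one]
  rw [this, map_smul, smul_eq_mul, mul_comm]

lemma eval_mapPhi (φ : MvA d →ₗ[ℝ] ℝ) (P : Polynomial (MvA d)) (t : ℝ) :
    (mapPhi φ P).eval t = φ (P.eval (C t)) := by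
  rw [mapPhi, Polynomial.eval_finset_sum]
  have hP : P.eval (C t) = ∑ m ∈ P.support, (t ^ m) • P.coeff m := by
    conv_lhs => rw [Polynomial.eval_eq_sum, Polynomial.sum]
    refine Finset.sum_congr rfl fun m _ => ?_
    rw [smul_eq_C_mul, map_pow, mul_comm]
  rw [hP, map_sum]
  refine Finset.sum_congr rfl fun m _ => ?_
  rw [map_smul, smul_eq_mul, Polynomial.eval_mul, Polynomial.eval_C, Polynomial.eval_pow,
    Polynomial.eval_X, mul_comm]

/-- Tangent line bound for a real polynomial with everywhere nonpositive second derivative. -/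
lemma aux_tangent (h : Polynomial ℝ)
    (h2 : ∀ t : ℝ, h.derivative.derivative.eval t ≤ 0) :
    h.eval 1 ≤ h.eval 0 + h.derivative.eval 0 := by
  have hdiff : Differentiable ℝ (fun t : ℝ => h.eval t) := h.differentiable
  have hderiv : ∀ t : ℝ, deriv (fun s : ℝ => h.eval s) t = h.derivative.eval t :=
    fun t => Polynomial.deriv (p := h) (x := t)
  have hanti : Antitone (fun t : ℝ => h.derivative.eval t) := by
    apply antitone_of_deriv_nonpos h.derivative.differentiable
    intro t
    rw [Polynomial.deriv]
    exact h2 t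
  obtain ⟨c, hc, hslope⟩ := exists_deriv_eq_slope (fun t : ℝ => h.eval t) one_pos
    (h.continuous.continuousOn) (hdiff.differentiableOn)
  rw [hderiv] at hslope
  have : h.eval 1 - h.eval 0 = h.derivative.eval c := by
    rw [hslope]; ring
  have hle : h.derivative.eval c ≤ h.derivative.eval 0 := hanti (le_of_lt hc.1)
  linarith

lemma aux_sum_neg_outer {R : Type*} [CommRing R] {ι κ : Type*} [Fintype ι] [Fintype κ]
    (a : ι → ι → R) (b : ι → κ → R) (v : ι → R)
    (h : ∀ i j, a i j = -∑ k, b j k * b i k) :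
    ∑ i, (∑ j, a i j * v j) * v i = -∑ k, (∑ i, b i k * v i) ^ 2 := by
  calc ∑ i, (∑ j, a i j * v j) * v i
      = ∑ i, ∑ j, a i j * v j * v i := by
        exact Finset.sum_congr rfl fun i _ => Finset.sum_mul _ _ _
    _ = ∑ i, ∑ j, ∑ k, -(b j k * v j * (b i k * v i)) := by
        refine Finset.sum_congr rfl fun i _ => Finset.sum_congr rfl fun j _ => ?_
        rw [h i j, neg_mul, neg_mul, Finset.sum_mul, Finset.sum_mul, ← Finset.sum_neg_distrib]
        exact Finset.sum_congr rfl fun k _ => by ring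
    _ = ∑ i, ∑ k, ∑ j, -(b j k * v j * (b i k * v i)) := by
        exact Finset.sum_congr rfl fun i _ => Finset.sum_comm
    _ = ∑ k, ∑ i, ∑ j, -(b j k * v j * (b i k * v i)) := Finset.sum_comm
    _ = -∑ k, (∑ i, b i k * v i) ^ 2 := by
        rw [← Finset.sum_neg_distrib]
        refine Finset.sum_congr rfl fun k _ => ?_
        have step : ∀ i, ∑ j, -(b j k * v j * (b i k * v i))
            = -((b i k * v i) * ∑ j, b j k * v j) := by
          intro i
          rw [Finset.mul_sum, ← Finset.sum_neg_distrib]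
          exact Finset.sum_congr rfl fun j _ => by ring
        rw [Finset.sum_congr rfl fun i _ => step i, Finset.sum_neg_distrib,
          ← Finset.sum_mul, ← sq]


lemma phi_C {d : ℕ} (φ : MvA d →ₗ[ℝ] ℝ) (hφ1 : φ 1 = 1) (r : ℝ) : φ (C r) = r := by
  have : (C r : MvA d) = r • 1 := by rw [smul_eq_C_mul, mul_one]
  rw [this, map_smul, smul_eq_mul, hφ1, mul_one]

lemma aux_jensen {d : ℕ} (φ : MvA d →ₗ[ℝ] ℝ) (hφ1 : φ 1 = 1)
    (n : ℕ) (hsq : ∀ p : MvA d, p.totalDegree ≤ n → 0 ≤ φ (p ^ 2))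
    (G : MvA d) (hG : IsSOSConcave G) (hGd : degHalf G ≤ n) (hd1 : Fin d → 1 ≤ n) :
    φ G ≤ eval (phiPoint φ) G := by
  set u := phiPoint φ with hu
  obtain ⟨r, L, hL⟩ := hG
  have hLentry : ∀ i j : Fin d, pderiv i (pderiv j G) = -∑ k, L i k * L j k := by
    intro i j
    have h1 : (-polyHessian G) i j = (L * L.transpose) i j := by rw [hL]
    rw [Matrix.mul_apply] at h1
    have h2 : (-polyHessian G) i j = -(pderiv i (pderiv j G)) := rfl
    rw [h2] at h1
    rw [show (∑ k, L i k * L.transpose k j) = ∑ k, L i k * L j k from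
      Finset.sum_congr rfl fun k _ => rfl] at h1
    rw [← h1, neg_neg]
  -- degree bound on L entries
  have hLdeg : ∀ i k, 2 * (L i k).totalDegree ≤ G.totalDegree - 2 := by
    intro i k
    have h1 : 2 * (L i k).totalDegree ≤ (∑ k', (L i k') ^ 2).totalDegree :=
      aux_sq_le_sum_sq (fun k' => L i k') k
    have h2 : (∑ k', (L i k') ^ 2) = -(pderiv i (pderiv i G)) := by
      rw [hLentry i i, neg_neg]
      exact Finset.sum_congr rfl fun k' _ => (sq (L i k')) ▸ (pow_two (L i k'))
    rw [h2, totalDegree_neg] at h1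
    have h3 : (pderiv i (pderiv i G)).totalDegree ≤ G.totalDegree - 2 := by
      have := aux_totalDegree_pderiv_le i (pderiv i G)
      have := aux_totalDegree_pderiv_le i G
      omega
    omega
  set P := lineMap u G with hP
  -- Chain rule results
  have hP1 : P.derivative = ∑ i, lineMap u (pderiv i G) * Polynomial.C (X i - C (u i)) :=
    lineMap_chain u G
  have hP2 : P.derivative.derivative
      = ∑ i, (∑ j, lineMap u (pderiv j (pderiv i G)) * Polynomial.C (X j - C (u j)))
          * Polynomial.C (X i - C (u i)) := by
    rw [hP1, map_sum]
    refine Finset.sum_congr rfl fun i _ => ?_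
    rw [Polynomial.derivative_mul, Polynomial.derivative_C, mul_zero, add_zero, lineMap_chain]
  have hHess : ∀ i j : Fin d, lineMap u (pderiv j (pderiv i G))
      = -∑ k, lineMap u (L j k) * lineMap u (L i k) := by
    intro i j
    rw [hLentry j i, map_neg, map_sum]
    exact congrArg _ (Finset.sum_congr rfl fun k _ => map_mul _ _ _)
  have hQ : P.derivative.derivative
      = -∑ k, (∑ i, lineMap u (L i k) * Polynomial.C (X i - C (u i))) ^ 2 := by
    rw [hP2]
    exact aux_sum_neg_outer (fun i j => lineMap u (pderiv j (pderiv i G)))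
      (fun i k => lineMap u (L i k)) (fun i => Polynomial.C (X i - C (u i))) hHess
  set h := mapPhi φ P with hh
  -- three evaluations
  have A1 : h.eval 1 = φ G := by
    rw [hh, eval_mapPhi, map_one, lineMap_eval_one]
  have A2 : h.eval 0 = eval u G := by
    rw [hh, eval_mapPhi, map_zero, lineMap_eval_zero, phi_C φ hφ1]
  have A3 : h.derivative.eval 0 = 0 := by
    rw [hh, ← mapPhi_derivative, eval_mapPhi, map_zero, hP1]
    have : (∑ i, lineMap u (pderiv i G) * Polynomial.C (X i - C (u i))).eval (0 : MvA d)
        = ∑ i, C (eval u (pderiv i G)) * (X i - C (u i)) := by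
      rw [Polynomial.eval_finset_sum]
      exact Finset.sum_congr rfl fun i _ => by
        rw [Polynomial.eval_mul, Polynomial.eval_C, lineMap_eval_zero]
    rw [this, map_sum]
    refine Finset.sum_eq_zero fun i _ => ?_
    have hsm : (C (eval u (pderiv i G)) : MvA d) * (X i - C (u i))
        = eval u (pderiv i G) • (X i - C (u i)) := by rw [smul_eq_C_mul]
    rw [hsm, map_smul, map_sub, smul_eq_mul]
    have : φ (X i) = u i := rfl
    rw [this, phi_C φ hφ1, sub_self, mul_zero]
  -- second derivative nonpositive
  have A4 : ∀ t : ℝ, h.derivative.derivative.eval t ≤ 0 := by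
    intro t
    rw [hh, ← mapPhi_derivative, ← mapPhi_derivative, eval_mapPhi, hQ]
    have heval : ((-∑ k, (∑ i, lineMap u (L i k) * Polynomial.C (X i - C (u i))) ^ 2).eval
        ((C t) : MvA d))
        = -∑ k, ((∑ i, lineMap u (L i k) * Polynomial.C (X i - C (u i))).eval (C t)) ^ 2 := by
      rw [Polynomial.eval_neg, Polynomial.eval_finset_sum]
      exact congrArg _ (Finset.sum_congr rfl fun k _ => Polynomial.eval_pow _)
    rw [heval, map_neg, map_sum, neg_nonpos]
    refine Finset.sum_nonneg fun k _ => ?_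
    -- identify the evaluated polynomial and bound its degree
    set qk := (∑ i, lineMap u (L i k) * Polynomial.C (X i - C (u i))).eval ((C t) : MvA d)
      with hqk
    have hqk2 : qk = ∑ i, aeval (fun i' => (X i' - C (u i')) * C t + C (u i')) (L i k)
        * (X i - C (u i)) := by
      rw [hqk, Polynomial.eval_finset_sum]
      exact Finset.sum_congr rfl fun i _ => by
        rw [Polynomial.eval_mul, Polynomial.eval_C, lineMap_eval]
    have hdeg : qk.totalDegree ≤ n := by
      rw [hqk2]
      refine (totalDegree_finset_sum _ _).trans (Finset.sup_le fun i _ => ?_)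
      have hσ : ∀ i', ((X i' - C (u i')) * C t + C (u i') : MvA d).totalDegree ≤ 1 := by
        intro i'
        refine (totalDegree_add _ _).trans (max_le ?_ (by simp [totalDegree_C]))
        refine (totalDegree_mul _ _).trans ?_
        have h1 : (X i' - C (u i') : MvA d).totalDegree ≤ 1 := by
          refine (totalDegree_sub _ _).trans (max_le ?_ (by simp [totalDegree_C]))
          exact le_of_eq (totalDegree_X i')
        have h2 : (C t : MvA d).totalDegree = 0 := totalDegree_C t
        omega
      have h1 : (aeval (fun i' => (X i' - C (u i')) * C t + C (u i')) (L i k)).totalDegree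
          ≤ (L i k).totalDegree := aux_totalDegree_aeval_le _ hσ _
      have h2 : (X i - C (u i) : MvA d).totalDegree ≤ 1 := by
        refine (totalDegree_sub _ _).trans (max_le ?_ (by simp [totalDegree_C]))
        exact le_of_eq (totalDegree_X i)
      refine (totalDegree_mul _ _).trans ?_
      have h3 := hLdeg i k
      have h4 : degHalf G ≤ n := hGd
      have h5 : 1 ≤ n := hd1 i
      rw [degHalf] at h4
      omega
    exact hsq qk hdeg
  have := aux_tangent h A4
  rw [A1, A2, A3, add_zero] at this
  exact this

lemma aux_phi_two_mul {d : ℕ} (ψ : MvA d →ₗ[ℝ] ℝ) (p : MvA d) : ψ (2 * p) = 2 * ψ p := by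
  have : (2 : MvA d) * p = (2 : ℝ) • p := by
    rw [smul_eq_C_mul, map_ofNat]
  rw [this, map_smul, smul_eq_mul]

set_option maxHeartbeats 800000 in
/-- Diagonal moment bounds. -/
lemma aux_diag {d n : ℕ} (ψ : MvA d →ₗ[ℝ] ℝ) (hφ1 : ψ 1 = 1)
    (hsq : ∀ p : MvA d, p.totalDegree ≤ n → 0 ≤ ψ (p ^ 2))
    (hball : ∀ p : MvA d, p.totalDegree ≤ n - 1 → 0 ≤ ψ (p ^ 2 * (1 - ∑ i, X i ^ 2))) :
    ∀ s : ℕ, ∀ α : Fin d →₀ ℕ, (α.sum fun _ e => e) = s → s ≤ n →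
      0 ≤ ψ ((monomial α 1) ^ 2) ∧ ψ ((monomial α 1) ^ 2) ≤ 1 := by
  intro s
  induction s with
  | zero =>
    intro α hα _
    have : α = 0 := by
      ext i
      by_contra hne
      have : 0 < α i := Nat.pos_of_ne_zero (by simpa using hne)
      have hmem : i ∈ α.support := Finsupp.mem_support_iff.mpr (by omega)
      have : α i ≤ α.sum fun _ e => e := Finset.single_le_sum (fun j _ => Nat.zero_le _) hmem
      omega
    subst this
    have h1 : (monomial (0 : Fin d →₀ ℕ) (1:ℝ)) = 1 := by
      simp
    rw [h1, one_pow, hφ1]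
    norm_num
  | succ s' ih =>
    intro α hα hsn
    -- find i with α i ≠ 0
    have hne : α ≠ 0 := by
      intro h0; rw [h0] at hα; simp [Finsupp.sum_zero_index] at hα
    obtain ⟨i, hi⟩ : ∃ i, α i ≠ 0 := by
      by_contra hno
      push_neg at hno
      exact hne (Finsupp.ext fun i => hno i)
    set β := α - Finsupp.single i 1 with hβ
    have hle : Finsupp.single i 1 ≤ α := by rw [Finsupp.single_le_iff]; omega
    have hβα : β + Finsupp.single i 1 = α := tsub_add_cancel_of_le hle
    have hβsum : (β.sum fun _ e => e) = s' := by
      have : (β.sum fun _ e => e) + ((Finsupp.single i 1).sum fun _ e => e)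
          = α.sum fun _ e => e := by
        rw [← Finsupp.sum_add_index' (by simp) (by intros; rfl), hβα]
      rw [Finsupp.sum_single_index (by rfl)] at this
      omega
    obtain ⟨hβ0, hβ1⟩ := ih β hβsum (by omega)
    set m := (monomial β (1:ℝ)) with hm
    -- all products m * X j have controlled moments
    have hdegm : ∀ j : Fin d, (m * X j : MvA d).totalDegree ≤ n := by
      intro j
      have : (m * X j : MvA d) = monomial (β + Finsupp.single j 1) 1 := by
        rw [hm, X, monomial_mul, mul_one]
      rw [this]
      refine (totalDegree_monomial_le _ _).trans ?_
      show ((β + Finsupp.single j 1).sum fun _ e => e) ≤ n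
      rw [Finsupp.sum_add_index' (by simp) (by intros; rfl),
        Finsupp.sum_single_index (by rfl)]
      omega
    have hnn : ∀ j : Fin d, 0 ≤ ψ ((m * X j) ^ 2) := fun j => hsq _ (hdegm j)
    -- ball inequality
    have hkey : m ^ 2 * (1 - ∑ j, X j ^ 2) = m ^ 2 - ∑ j, (m * X j) ^ 2 := by
      rw [mul_sub, mul_one, Finset.mul_sum]
      exact congrArg (HSub.hSub (m ^ 2)) (Finset.sum_congr rfl fun j _ => by ring)
    have hmdeg : m.totalDegree ≤ n - 1 := by
      rw [hm]
      refine (totalDegree_monomial_le _ _).trans ?_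
      show (β.sum fun _ e => e) ≤ n - 1
      omega
    have hball' := hball m hmdeg
    rw [hkey, map_sub, map_sum, sub_nonneg] at hball'
    -- so  ∑_j ψ((m Xⱼ)²) ≤ ψ(m²) ≤ 1
    have hsum_le : ∑ j, ψ ((m * X j) ^ 2) ≤ ψ (m ^ 2) := hball'
    have hsingle : ψ ((m * X i) ^ 2) ≤ ∑ j, ψ ((m * X j) ^ 2) :=
      Finset.single_le_sum (fun j _ => hnn j) (mem_univ i)
    have hmono : (monomial α (1:ℝ)) = m * X i := by
      rw [hm, X, monomial_mul, mul_one, hβα]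
    rw [hmono]
    exact ⟨hnn i, le_trans hsingle (le_trans hsum_le hβ1)⟩

/-- split a multi-index -/
lemma aux_split {d : ℕ} (α : Fin d →₀ ℕ) (k : ℕ) (hk : k ≤ α.sum fun _ e => e) :
    ∃ β γ : Fin d →₀ ℕ, β + γ = α ∧ (β.sum fun _ e => e) = k := by
  induction k with
  | zero => exact ⟨0, α, by simp, by simp⟩
  | succ k' ih =>
    obtain ⟨β, γ, hβγ, hβs⟩ := ih (by omega)
    have hsum : (β.sum fun _ e => e) + (γ.sum fun _ e => e) = α.sum fun _ e => e := by
      rw [← Finsupp.sum_add_index' (by simp) (by intros; rfl), hβγ]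
    have hγpos : 0 < γ.sum fun _ e => e := by omega
    obtain ⟨i, hi⟩ : ∃ i, γ i ≠ 0 := by
      by_contra hno
      push_neg at hno
      have : γ = 0 := Finsupp.ext fun i => hno i
      rw [this] at hγpos
      simp [Finsupp.sum_zero_index] at hγpos
    have hle : Finsupp.single i 1 ≤ γ := by rw [Finsupp.single_le_iff]; omega
    refine ⟨β + Finsupp.single i 1, γ - Finsupp.single i 1, ?_, ?_⟩
    · rw [add_assoc, add_comm (Finsupp.single i 1), tsub_add_cancel_of_le hle, hβγ]
    · rw [Finsupp.sum_add_index' (by simp) (by intros; rfl),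
        Finsupp.sum_single_index (by rfl), hβs]

lemma aux_offdiag {d n : ℕ} (ψ : MvA d →ₗ[ℝ] ℝ) (hφ1 : ψ 1 = 1)
    (hsq : ∀ p : MvA d, p.totalDegree ≤ n → 0 ≤ ψ (p ^ 2))
    (hball : ∀ p : MvA d, p.totalDegree ≤ n - 1 → 0 ≤ ψ (p ^ 2 * (1 - ∑ i, X i ^ 2)))
    (α : Fin d →₀ ℕ) (hα : (α.sum fun _ e => e) ≤ 2 * n) :
    |ψ (monomial α 1)| ≤ 1 := by
  obtain ⟨β, γ, hβγ, hβs⟩ := aux_split α (min (α.sum fun _ e => e) n) (min_le_left _ _)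
  have hsum : (β.sum fun _ e => e) + (γ.sum fun _ e => e) = α.sum fun _ e => e := by
    rw [← Finsupp.sum_add_index' (by simp) (by intros; rfl), hβγ]
  have hβn : (β.sum fun _ e => e) ≤ n := by omega
  have hγn : (γ.sum fun _ e => e) ≤ n := by omega
  set mb := (monomial β (1:ℝ)) with hmb
  set mc := (monomial γ (1:ℝ)) with hmc
  have hmono : monomial α (1:ℝ) = mb * mc := by
    rw [hmb, hmc, monomial_mul, mul_one, hβγ]
  have hdb : mb.totalDegree ≤ n := (totalDegree_monomial_le _ _).trans hβn
  have hdc : mc.totalDegree ≤ n := (totalDegree_monomial_le _ _).trans hγn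
  obtain ⟨hb0, hb1⟩ := aux_diag ψ hφ1 hsq hball _ β rfl hβn
  obtain ⟨hc0, hc1⟩ := aux_diag ψ hφ1 hsq hball _ γ rfl hγn
  have hplus : 0 ≤ ψ ((mb + mc) ^ 2) := by
    refine hsq _ ?_
    exact (totalDegree_add _ _).trans (max_le hdb hdc)
  have hminus : 0 ≤ ψ ((mb - mc) ^ 2) := by
    refine hsq _ ?_
    exact (totalDegree_sub _ _).trans (max_le hdb hdc)
  have hexp1 : (mb + mc) ^ 2 = mb ^ 2 + mc ^ 2 + 2 * (mb * mc) := by ring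
  have hexp2 : (mb - mc) ^ 2 = mb ^ 2 + mc ^ 2 - 2 * (mb * mc) := by ring
  rw [hexp1, map_add, map_add, aux_phi_two_mul] at hplus
  rw [hexp2, map_sub, map_add, aux_phi_two_mul] at hminus
  rw [hmono, abs_le]
  constructor <;> nlinarith

lemma aux_lower_bound {d n : ℕ} (ψ : MvA d →ₗ[ℝ] ℝ) (hφ1 : ψ 1 = 1)
    (hsq : ∀ p : MvA d, p.totalDegree ≤ n → 0 ≤ ψ (p ^ 2))
    (hball : ∀ p : MvA d, p.totalDegree ≤ n - 1 → 0 ≤ ψ (p ^ 2 * (1 - ∑ i, X i ^ 2)))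
    (f : MvA d) (hf : f.totalDegree ≤ 2 * n) :
    -(∑ α ∈ f.support, |coeff α f|) ≤ ψ f := by
  conv_rhs => rw [f.as_sum]
  rw [map_sum, neg_eq_neg_one_mul, Finset.mul_sum]
  refine Finset.sum_le_sum fun α hα => ?_
  have hmono : monomial α (coeff α f) = (coeff α f) • monomial α (1:ℝ) := by
    rw [smul_monomial, smul_eq_mul, mul_one]
  rw [hmono, map_smul, smul_eq_mul]
  have hoff : |ψ (monomial α 1)| ≤ 1 :=
    aux_offdiag ψ hφ1 hsq hball α ((le_totalDegree hα).trans hf)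
  have habs : |coeff α f * ψ (monomial α 1)| ≤ |coeff α f| := by
    rw [abs_mul]
    calc |coeff α f| * |ψ (monomial α 1)| ≤ |coeff α f| * 1 :=
          mul_le_mul_of_nonneg_left hoff (abs_nonneg _)
      _ = |coeff α f| := mul_one _
  have := neg_abs_le (coeff α f * ψ (monomial α 1))
  nlinarith [abs_nonneg (coeff α f)]

def evalLM {d : ℕ} (y : Fin d → ℝ) : MvA d →ₗ[ℝ] ℝ where
  toFun := eval y
  map_add' := fun a b => map_add _ _ _
  map_smul' := fun r a => by
    simp only [smul_eq_C_mul, map_mul, eval_C, RingHom.id_apply, smul_eq_mul]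

-- degree facts about the ball constraint
lemma gl_deg_le {d : ℕ} : (1 - ∑ j : Fin d, X j ^ 2 : MvA d).totalDegree ≤ 2 := by
  refine (totalDegree_sub _ _).trans (max_le ?_ ?_)
  · rw [totalDegree_one]; omega
  · refine (totalDegree_finset_sum _ _).trans (Finset.sup_le fun j _ => ?_)
    rw [totalDegree_X_pow]

lemma gl_deg_ge {d : ℕ} (i : Fin d) : 2 ≤ (1 - ∑ j : Fin d, X j ^ 2 : MvA d).totalDegree := by
  have hc : coeff (Finsupp.single i 2) (1 - ∑ j : Fin d, X j ^ 2 : MvA d) = -1 := by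
    rw [coeff_sub, coeff_one, if_neg, coeff_sum]
    · rw [Finset.sum_eq_single i]
      · rw [X_pow_eq_monomial, coeff_monomial, if_pos rfl]
        norm_num
      · intro j _ hne
        rw [X_pow_eq_monomial, coeff_monomial, if_neg]
        intro h
        exact hne ((Finsupp.single_left_inj (by norm_num)).mp h)
      · intro h; exact absurd (mem_univ i) h
    · intro h
      have : Finsupp.single i 2 = 0 := h.symm
      rw [Finsupp.single_eq_zero] at this
      norm_num at this
  have hmem : Finsupp.single i 2 ∈ (1 - ∑ j : Fin d, X j ^ 2 : MvA d).support := by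
    rw [mem_support_iff, hc]; norm_num
  have := le_totalDegree hmem
  rwa [Finsupp.sum_single_index (by rfl)] at this


/-- If `n ≥ n_min`, `φ*` is feasible at order `n` with `φ*(f) = ρₙ`, and
`f(φ*(x)) ≤ ρₙ`, then `ρₙ = f*` and `x* = φ*(x) ∈ Ω` is a global minimizer of `f` on `Ω`. -/
theorem exactness_certificate {d m : ℕ}
    (g : Fin (m + 2) → MvPolynomial (Fin d) ℝ) (hg : GoodConstraints g)
    (hΩ : (OmegaSet g).Nonempty)
    (f : MvPolynomial (Fin d) ℝ)
    (n : ℕ) (hn : nMin g f ≤ n)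
    (φ : MvPolynomial (Fin d) ℝ →ₗ[ℝ] ℝ) (hφ : Feasible g n φ)
    (hatt : φ f = rho g f n)
    (hle : eval (phiPoint φ) f ≤ rho g f n) :
    rho g f n = fstar g f ∧ phiPoint φ ∈ OmegaSet g ∧
      ∀ y ∈ OmegaSet g, eval (phiPoint φ) f ≤ eval y f := by
  obtain ⟨hg0, hgl, hgc⟩ := hg
  obtain ⟨hφ1, hφpos⟩ := hφ
  -- basic degree bookkeeping
  have hfdeg : degHalf f ≤ n := le_trans (le_max_left _ _) hn
  have hjdeg : ∀ j : Fin (m + 2), j ≠ 0 → degHalf (g j) ≤ n := by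
    intro j hj
    refine le_trans (le_trans ?_ (le_max_right (degHalf f) _)) hn
    exact Finset.le_sup (f := fun j => degHalf (g j)) (Finset.mem_erase.mpr ⟨hj, mem_univ j⟩)
  have hlast_ne : (Fin.last (m + 1) : Fin (m + 2)) ≠ 0 := by
    intro h
    have := congrArg Fin.val h
    simp [Fin.last] at this
  have hd1 : Fin d → 1 ≤ n := by
    intro i
    have h2 := gl_deg_ge (d := d) i
    have h3 := hjdeg _ hlast_ne
    rw [degHalf, hgl] at h3
    omega
  -- square positivity (j = 0)
  have hsq : ∀ p : MvA d, p.totalDegree ≤ n → 0 ≤ φ (p ^ 2) := by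
    intro p hp
    have h0 : degHalf (g 0) = 0 := by rw [hg0, degHalf, totalDegree_one]
    have := hφpos 0 p (by rw [h0]; omega)
    rwa [hg0, mul_one] at this
  -- membership of the candidate point
  have hmem : phiPoint φ ∈ OmegaSet g := by
    intro j
    by_cases hj : j = 0
    · rw [hj, hg0, map_one]; norm_num
    · have hpos : 0 ≤ φ (g j) := by
        have := hφpos j 1 (by rw [totalDegree_one]; omega)
        rwa [one_pow, one_mul] at this
      have hjen : φ (g j) ≤ eval (phiPoint φ) (g j) :=
        aux_jensen φ hφ1 n hsq (g j) (hgc j hj) (hjdeg j hj) hd1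
      exact le_trans hpos hjen
  -- lower bound for all feasible functionals
  set M : ℝ := ∑ α ∈ f.support, |coeff α f| with hM
  have hfdeg2 : f.totalDegree ≤ 2 * n := by
    rw [degHalf] at hfdeg; omega
  have hLB : ∀ ψ : MvA d →ₗ[ℝ] ℝ, Feasible g n ψ → -M ≤ ψ f := by
    rintro ψ ⟨hψ1, hψpos⟩
    refine aux_lower_bound ψ hψ1 ?_ ?_ f hfdeg2
    · intro p hp
      have h0 : degHalf (g 0) = 0 := by rw [hg0, degHalf, totalDegree_one]
      have := hψpos 0 p (by rw [h0]; omega)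
      rwa [hg0, mul_one] at this
    · intro p hp
      have h1 : degHalf (g (Fin.last (m + 1))) ≤ 1 := by
        rw [degHalf, hgl]
        have := gl_deg_le (d := d)
        omega
      have := hψpos (Fin.last (m + 1)) p (by omega)
      rwa [hgl] at this
  -- the feasible-value set
  set S : Set ℝ := {r : ℝ | ∃ ψ : MvPolynomial (Fin d) ℝ →ₗ[ℝ] ℝ, Feasible g n ψ ∧ ψ f = r}
    with hS
  have hSbdd : BddBelow S := by
    refine ⟨-M, fun r hr => ?_⟩
    obtain ⟨ψ, hψ, hr⟩ := hr
    rw [← hr]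
    exact hLB ψ hψ
  -- evaluation functionals are feasible
  have hevalFeas : ∀ y ∈ OmegaSet g, Feasible g n (evalLM y) := by
    intro y hy
    constructor
    · show eval y (1 : MvA d) = 1
      rw [map_one]
    · intro j p _
      show 0 ≤ eval y (p ^ 2 * g j)
      rw [map_mul, map_pow]
      exact mul_nonneg (sq_nonneg _) (hy j)
  have hrho_le : ∀ y ∈ OmegaSet g, rho g f n ≤ eval y f := by
    intro y hy
    exact csInf_le hSbdd ⟨evalLM y, hevalFeas y hy, rfl⟩
  -- fstar facts
  have hfsbdd : BddBelow ((fun x => eval x f) '' OmegaSet g) := by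
    refine ⟨rho g f n, fun r hr => ?_⟩
    obtain ⟨y, hy, hr⟩ := hr
    rw [← hr]
    exact hrho_le y hy
  have h1 : fstar g f ≤ eval (phiPoint φ) f :=
    csInf_le hfsbdd ⟨phiPoint φ, hmem, rfl⟩
  have h2 : rho g f n ≤ fstar g f := by
    refine le_csInf (hΩ.image _) ?_
    rintro r ⟨y, hy, hr⟩
    rw [← hr]
    exact hrho_le y hy
  have heq : rho g f n = fstar g f := le_antisymm h2 (le_trans h1 hle)
  exact ⟨heq, hmem, fun y hy => le_trans hle (hrho_le y hy)⟩
end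
end
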